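/- Let V, W, V', W' be m-dimensional subspaces of ℂ^n. If there exist principal bases with identical principal angles, i.e. orthonormal bases (v_i) of V, (w_i) of W, (v'_i) of V', (w'_i) of W' and numbers c_i ≥ 0 with ⟨v_i, w_j⟩ = c_i δ_{ij} = ⟨v'_i, w'_j⟩, then there exists a unitary U on ℂ^n with U(V) = V' and U(W) = W'. -/

import Mathlib

open Submodule

set_option maxHeartbeats 1000000 in
/-- If two finite families in a finite-dimensional complex inner product space have the same
Gram matrix, there is a unitary mapping one family to the other. -/
lemma gram_unitary {n : ℕ} {ι : Type*} [Fintype ι] [DecidableEq ι]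
    (u u' : ι → EuclideanSpace ℂ (Fin n))
    (hG : ∀ a b, (inner ℂ (u a) (u b) : ℂ) = inner ℂ (u' a) (u' b)) :
    ∃ U : EuclideanSpace ℂ (Fin n) ≃ₗᵢ[ℂ] EuclideanSpace ℂ (Fin n), ∀ i, U (u i) = u' i := by
  set f : (ι → ℂ) →ₗ[ℂ] EuclideanSpace ℂ (Fin n) := Fintype.linearCombination ℂ u with hf
  set f' : (ι → ℂ) →ₗ[ℂ] EuclideanSpace ℂ (Fin n) := Fintype.linearCombination ℂ u' with hf'
  have hinner : ∀ a b, (inner ℂ (f a) (f b) : ℂ) = inner ℂ (f' a) (f' b) := by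
    intro a b
    simp only [hf, hf', Fintype.linearCombination_apply, sum_inner, inner_sum,
      inner_smul_left, inner_smul_right, hG]
  have hker : LinearMap.ker f = LinearMap.ker f' := by
    ext a
    simp only [LinearMap.mem_ker]
    constructor
    · intro h
      rw [← inner_self_eq_zero (𝕜 := ℂ) (x := f' a), ← hinner, h, inner_zero_right]
    · intro h
      rw [← inner_self_eq_zero (𝕜 := ℂ) (x := f a), hinner, h, inner_zero_right]
  obtain ⟨e, he⟩ : ∃ e : (LinearMap.range f ≃ₗ[ℂ] LinearMap.range f'),
      ∀ a, ((e ⟨f a, LinearMap.mem_range_self f a⟩ : LinearMap.range f') :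
        EuclideanSpace ℂ (Fin n)) = f' a := by
    refine ⟨(LinearMap.quotKerEquivRange f).symm ≪≫ₗ Submodule.quotEquivOfEq _ _ hker ≪≫ₗ
      LinearMap.quotKerEquivRange f', fun a => ?_⟩
    have h1 : (LinearMap.quotKerEquivRange f).symm ⟨f a, LinearMap.mem_range_self f a⟩ =
        Submodule.Quotient.mk a := by
      rw [LinearEquiv.symm_apply_eq]
      exact Subtype.ext (LinearMap.quotKerEquivRange_apply_mk f a).symm
    simp only [LinearEquiv.trans_apply]
    rw [h1]
    rw [Submodule.quotEquivOfEq_mk]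
    exact LinearMap.quotKerEquivRange_apply_mk f' a
  letI i1 : InnerProductSpace ℂ ↥(LinearMap.range f) := inferInstance
  letI i2 : InnerProductSpace ℂ ↥(LinearMap.range f') := inferInstance
  have hei : ∀ x y : LinearMap.range f, (inner ℂ (e x) (e y) : ℂ) = inner ℂ x y := by
    rintro ⟨_, a, rfl⟩ ⟨_, b, rfl⟩
    rw [Submodule.coe_inner, Submodule.coe_inner, he a, he b]
    exact (hinner a b).symm
  obtain ⟨U0, hU0⟩ : ∃ U0 : EuclideanSpace ℂ (Fin n) →ₗᵢ[ℂ] EuclideanSpace ℂ (Fin n),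
      ∀ a, U0 (f a) = f' a := by
    set T0 : LinearMap.range f →ₗᵢ[ℂ] LinearMap.range f' :=
      (e.isometryOfInner hei).toLinearIsometry with hT0
    set T : LinearMap.range f →ₗᵢ[ℂ] EuclideanSpace ℂ (Fin n) :=
      (LinearMap.range f').subtypeₗᵢ.comp T0 with hT
    refine ⟨T.extend, fun a => ?_⟩
    have := T.extend_apply ⟨f a, LinearMap.mem_range_self f a⟩
    rw [this]
    simpa [hT, hT0] using he a
  have hsurj : Function.Surjective U0 := by
    have hinj : Function.Injective U0.toLinearMap := U0.injective
    exact (LinearMap.injective_iff_surjective).mp hinj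
  refine ⟨LinearIsometryEquiv.ofSurjective U0 hsurj, fun i => ?_⟩
  have : u i = f (Pi.single i 1) := by simp [hf]
  have : U0 (u i) = u' i := by
    rw [this, hU0]; simp [hf']
  simpa using this

theorem stmt6 (n m : ℕ) (V W V' W' : Submodule ℂ (EuclideanSpace ℂ (Fin n)))
    (v w v' w' : Fin m → EuclideanSpace ℂ (Fin n)) (c : Fin m → ℝ)
    (hc : ∀ i, 0 ≤ c i)
    (hv : Orthonormal ℂ v) (hw : Orthonormal ℂ w)
    (hv' : Orthonormal ℂ v') (hw' : Orthonormal ℂ w')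
    (hVs : Submodule.span ℂ (Set.range v) = V)
    (hWs : Submodule.span ℂ (Set.range w) = W)
    (hVs' : Submodule.span ℂ (Set.range v') = V')
    (hWs' : Submodule.span ℂ (Set.range w') = W')
    (hvw : ∀ i j, (inner ℂ (v i) (w j) : ℂ) = if i = j then (c i : ℂ) else 0)
    (hvw' : ∀ i j, (inner ℂ (v' i) (w' j) : ℂ) = if i = j then (c i : ℂ) else 0) :
    ∃ U : EuclideanSpace ℂ (Fin n) ≃ₗᵢ[ℂ] EuclideanSpace ℂ (Fin n),
      Submodule.map (U.toLinearEquiv : EuclideanSpace ℂ (Fin n) →ₗ[ℂ] EuclideanSpace ℂ (Fin n)) V = V' ∧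
      Submodule.map (U.toLinearEquiv : EuclideanSpace ℂ (Fin n) →ₗ[ℂ] EuclideanSpace ℂ (Fin n)) W = W' := by
  have hG : ∀ a b : Fin m ⊕ Fin m,
      (inner ℂ (Sum.elim v w a) (Sum.elim v w b) : ℂ) = inner ℂ (Sum.elim v' w' a) (Sum.elim v' w' b) := by
    rintro (i | i) (j | j)
    · simp [orthonormal_iff_ite.mp hv i j, orthonormal_iff_ite.mp hv' i j]
    · simp [hvw i j, hvw' i j]
    · simp only [Sum.elim_inl, Sum.elim_inr]
      rw [← inner_conj_symm (w i) (v j), ← inner_conj_symm (w' i) (v' j), hvw j i, hvw' j i]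
    · simp [orthonormal_iff_ite.mp hw i j, orthonormal_iff_ite.mp hw' i j]
  obtain ⟨U, hU⟩ := gram_unitary (Sum.elim v w) (Sum.elim v' w') hG
  have hUc : ⇑(U.toLinearEquiv : EuclideanSpace ℂ (Fin n) →ₗ[ℂ] EuclideanSpace ℂ (Fin n)) = ⇑U := rfl
  refine ⟨U, ?_, ?_⟩
  · rw [← hVs, ← hVs', Submodule.map_span, hUc, ← Set.range_comp]
    congr 1
    ext x
    constructor
    · rintro ⟨i, rfl⟩; exact ⟨i, (hU (Sum.inl i)).symm⟩
    · rintro ⟨i, rfl⟩; exact ⟨i, hU (Sum.inl i)⟩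
  · rw [← hWs, ← hWs', Submodule.map_span, hUc, ← Set.range_comp]
    congr 1
    ext x
    constructor
    · rintro ⟨i, rfl⟩; exact ⟨i, (hU (Sum.inr i)).symm⟩
    · rintro ⟨i, rfl⟩; exact ⟨i, hU (Sum.inr i)⟩
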